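/- Let 2 < p < 3 and suppose v ∈ H^1(ℝ^3), ‖v‖_{L^2}=1, is close in H^1 (after translation by τ) to the ground state Q, solves ∇_v F_{ρ,ω,p} = 0 with |ω - ω_0| and ρ > 0 sufficiently small, and satisfies the decomposition v(·-τ) = Q + r with r ∈ T_Q^⟂, ‖r‖_{H^1} small. Then P(v(·-τ)) = Q and π_{T_Q^⟂}(∇_{v(·-τ)} F_{ρ,ω,p}) = 0; hence, by local uniqueness, v(·-τ) coincides with the radial solution w(ρ,ω), so v is radial up to translation. -/

import Mathlib

open MeasureTheory Real Filter Topology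
noncomputable section

abbrev E3 : Type := EuclideanSpace ℝ (Fin 3)

/-- `u` belongs to the Sobolev space `H¹(ℝ³)` (formalized: `u` and `|∇u|` are in `L²`,
with `u` differentiable). -/
def H1 (u : E3 → ℝ) : Prop :=
  MemLp u 2 (volume : Measure E3) ∧ Differentiable ℝ u ∧
    MemLp (fun x => ‖fderiv ℝ u x‖) 2 (volume : Measure E3)

/-- Coulomb energy `D(u) = ∫∫ |u(x)|²|u(y)|²/|x-y| dx dy`. -/
def coulomb (u : E3 → ℝ) : ℝ := ∫ x : E3, ∫ y : E3, (u x)^2 * (u y)^2 / ‖x - y‖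

/-- `‖∇u‖_{L²}²`. -/
def gradSq (u : E3 → ℝ) : ℝ := ∫ x : E3, ‖fderiv ℝ u x‖^2

/-- `‖u‖_{L^p}^p`. -/
def lpPow (u : E3 → ℝ) (p : ℝ) : ℝ := ∫ x : E3, |u x| ^ p

/-- `‖u‖_{L²}²`. -/
def l2sq (u : E3 → ℝ) : ℝ := ∫ x : E3, (u x)^2

/-- The `H¹` norm. -/
def h1norm (u : E3 → ℝ) : ℝ := Real.sqrt (gradSq u + l2sq u)

/-- A function is radially symmetric. -/
def IsRadial (u : E3 → ℝ) : Prop := ∀ x y : E3, ‖x‖ = ‖y‖ → u x = u y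

/-- The Laplacian `Δu = ∑ ∂²u/∂xᵢ²`. -/
def lap (u : E3 → ℝ) (x : E3) : ℝ :=
  ∑ i : Fin 3, fderiv ℝ (fun y => fderiv ℝ u y (EuclideanSpace.single i 1)) x
    (EuclideanSpace.single i 1)

/-- The partial derivative `∂_{x_i} Q`. -/
def dQ (Q : E3 → ℝ) (i : Fin 3) : E3 → ℝ := fun x => fderiv ℝ Q x (EuclideanSpace.single i 1)

/-- Pointwise inner product of gradients `∇u(x)·∇h(x)`. -/
def gradDot (u h : E3 → ℝ) (x : E3) : ℝ :=
  ∑ i : Fin 3, fderiv ℝ u x (EuclideanSpace.single i 1) * fderiv ℝ h x (EuclideanSpace.single i 1)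

/-- The S-P-S energy `E_p`. -/
def Ep (p : ℝ) (u : E3 → ℝ) : ℝ := (1/2) * gradSq u + (1/4) * coulomb u - (1/p) * lpPow u p

/-- The rescaled energy `E_{ρ,p}`. -/
def Erp (p ρ : ℝ) (u : E3 → ℝ) : ℝ := (1/2) * gradSq u + ρ * coulomb u - (1/p) * lpPow u p

/-- `K_{ρ,p}`: infimum of `E_{ρ,p}` over the unit `L²`-sphere in `H¹`. -/
def Kinf (p ρ : ℝ) : ℝ := sInf {E : ℝ | ∃ u, H1 u ∧ l2sq u = 1 ∧ Erp p ρ u = E}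

/-- Translation `Q_τ = Q(·+τ)`. -/
def transl (Q : E3 → ℝ) (τ : E3) : E3 → ℝ := fun x => Q (x + τ)

/-- `R` is `L²`-orthogonal to the tangent space `T_{Q_τ} = span{∂_{x_i}Q(·+τ)}`. -/
def perpTQ (Q : E3 → ℝ) (τ : E3) (R : E3 → ℝ) : Prop :=
  ∀ i : Fin 3, ∫ x : E3, R x * dQ Q i (x + τ) = 0

/-- The Gateaux derivative of `F_{ρ,ω,p}(u) = ½‖∇u‖² + ρD(u) - (1/p)‖u‖_p^p + (ω/2)‖u‖²`
at `u` in direction `h`; `∇_u F = 0` means `Fprime p ρ ω u h = 0` for all `h ∈ H¹`. -/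
def Fprime (p ρ ω : ℝ) (u h : E3 → ℝ) : ℝ :=
  (∫ x : E3, gradDot u h x)
    + 4 * ρ * (∫ x : E3, ∫ y : E3, (u x)^2 * u y * h y / ‖x - y‖)
    - (∫ x : E3, |u x| ^ (p - 2) * u x * h x)
    + ω * ∫ x : E3, u x * h x

/-- `h ⟂_{L²} T_Q` where `T_Q = span{∂_{x_i}Q}`. -/
def perpT0 (Q h : E3 → ℝ) : Prop := ∀ i : Fin 3, ∫ x : E3, h x * dQ Q i x = 0


section Aux

lemma fderiv_comp_add (f : E3 → ℝ) (hf : Differentiable ℝ f) (τ x : E3) :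
    fderiv ℝ (fun y => f (y + τ)) x = fderiv ℝ f (x + τ) := by
  have h1 : HasFDerivAt (fun y : E3 => y + τ) (ContinuousLinearMap.id ℝ E3) x :=
    (hasFDerivAt_id x).add_const τ
  have h2 := ((hf (x + τ)).hasFDerivAt.comp x h1).fderiv
  simpa [Function.comp_def] using h2

lemma fderiv_comp_sub' (f : E3 → ℝ) (hf : Differentiable ℝ f) (τ x : E3) :
    fderiv ℝ (fun y => f (y - τ)) x = fderiv ℝ f (x - τ) := by
  have := fderiv_comp_add f hf (-τ) x
  simpa [sub_eq_add_neg] using this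

lemma H1_transl (h : E3 → ℝ) (hh : H1 h) (τ : E3) : H1 (fun x => h (x + τ)) := by
  obtain ⟨h1, h2, h3⟩ := hh
  have hmp : MeasurePreserving (fun x : E3 => x + τ) volume volume :=
    measurePreserving_add_right volume τ
  refine ⟨h1.comp_measurePreserving hmp, h2.comp (differentiable_id.add_const τ), ?_⟩
  have : (fun x : E3 => ‖fderiv ℝ (fun y => h (y + τ)) x‖)
      = (fun x : E3 => ‖fderiv ℝ h x‖) ∘ (fun x : E3 => x + τ) := by
    funext x; simp [fderiv_comp_add h h2 τ x, Function.comp]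
  rw [this]
  exact h3.comp_measurePreserving hmp

lemma H1_add (f g : E3 → ℝ) (hf : H1 f) (hg : H1 g) : H1 (fun x => f x + g x) := by
  obtain ⟨f1, f2, f3⟩ := hf
  obtain ⟨g1, g2, g3⟩ := hg
  refine ⟨f1.add g1, f2.add g2, ?_⟩
  have hb : ∀ᵐ x : E3 ∂volume, ‖‖fderiv ℝ (fun y => f y + g y) x‖‖
      ≤ ‖‖fderiv ℝ f x‖ + ‖fderiv ℝ g x‖‖ := by
    filter_upwards with x
    rw [fderiv_fun_add (f2 x) (g2 x)]
    rw [Real.norm_eq_abs, Real.norm_eq_abs, abs_of_nonneg (norm_nonneg _),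
      abs_of_nonneg (by positivity)]
    exact norm_add_le _ _
  exact (f3.add g3).mono ((measurable_fderiv ℝ _).norm.aestronglyMeasurable) hb

lemma Fprime_transl (p ρ ω : ℝ) (u h : E3 → ℝ) (hu : Differentiable ℝ u)
    (hh : Differentiable ℝ h) (τ : E3) :
    Fprime p ρ ω (fun x => u (x - τ)) h = Fprime p ρ ω u (fun x => h (x + τ)) := by
  have T1 : (∫ x : E3, gradDot (fun y => u (y - τ)) h x)
      = ∫ x : E3, gradDot u (fun y => h (y + τ)) x := by
    unfold gradDot
    simp only [fderiv_comp_sub' u hu τ, fderiv_comp_add h hh τ]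
    calc (∫ x : E3, ∑ i : Fin 3, fderiv ℝ u (x - τ) (EuclideanSpace.single i 1)
            * fderiv ℝ h x (EuclideanSpace.single i 1))
        = ∫ x : E3, (fun z => ∑ i : Fin 3, fderiv ℝ u z (EuclideanSpace.single i 1)
            * fderiv ℝ h (z + τ) (EuclideanSpace.single i 1)) (x - τ) := by
          congr 1; funext x; simp
      _ = _ := integral_sub_right_eq_self
            (fun z => ∑ i : Fin 3, fderiv ℝ u z (EuclideanSpace.single i 1)
              * fderiv ℝ h (z + τ) (EuclideanSpace.single i 1)) τ
  have T2 : (∫ x : E3, ∫ y : E3, (u (x - τ))^2 * u (y - τ) * h y / ‖x - y‖)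
      = ∫ x : E3, ∫ y : E3, (u x)^2 * u y * h (y + τ) / ‖x - y‖ := by
    have inner : ∀ x : E3, (∫ y : E3, (u (x - τ))^2 * u (y - τ) * h y / ‖x - y‖)
        = ∫ y : E3, (u (x - τ))^2 * u y * h (y + τ) / ‖x - τ - y‖ := by
      intro x
      calc (∫ y : E3, (u (x - τ))^2 * u (y - τ) * h y / ‖x - y‖)
          = ∫ y : E3, (fun z => (u (x - τ))^2 * u z * h (z + τ) / ‖x - τ - z‖) (y - τ) := by
            congr 1; funext y
            have : x - τ - (y - τ) = x - y := by abel
            simp [this]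
        _ = _ := integral_sub_right_eq_self
              (fun z => (u (x - τ))^2 * u z * h (z + τ) / ‖x - τ - z‖) τ
    calc (∫ x : E3, ∫ y : E3, (u (x - τ))^2 * u (y - τ) * h y / ‖x - y‖)
        = ∫ x : E3, (fun z => ∫ y : E3, (u z)^2 * u y * h (y + τ) / ‖z - y‖) (x - τ) := by
          congr 1; funext x; exact inner x
      _ = _ := integral_sub_right_eq_self
            (fun z => ∫ y : E3, (u z)^2 * u y * h (y + τ) / ‖z - y‖) τ
  have T3 : (∫ x : E3, |u (x - τ)| ^ (p - 2) * u (x - τ) * h x)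
      = ∫ x : E3, |u x| ^ (p - 2) * u x * h (x + τ) := by
    calc (∫ x : E3, |u (x - τ)| ^ (p - 2) * u (x - τ) * h x)
        = ∫ x : E3, (fun z => |u z| ^ (p - 2) * u z * h (z + τ)) (x - τ) := by
          congr 1; funext x; simp
      _ = _ := integral_sub_right_eq_self
            (fun z => |u z| ^ (p - 2) * u z * h (z + τ)) τ
  have T4 : (∫ x : E3, u (x - τ) * h x) = ∫ x : E3, u x * h (x + τ) := by
    calc (∫ x : E3, u (x - τ) * h x)
        = ∫ x : E3, (fun z => u z * h (z + τ)) (x - τ) := by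
          congr 1; funext x; simp
      _ = _ := integral_sub_right_eq_self (fun z => u z * h (z + τ)) τ
  unfold Fprime
  rw [T1, T2, T3, T4]

end Aux

/-- conclusion of the proof. If `v` (on the unit `L²` sphere) is a critical
point of `F_{ρ,ω,p}` close to `Q` after translation by `τ`, decomposed as
`v(·-τ) = Q + r` with `r ⟂ T_Q` small, then `P(v(·-τ)) = Q` and
`π_{T_Q^⟂}(∇_{v(·-τ)}F_{ρ,ω,p}) = 0`; hence by the local uniqueness property and the
radial branch `w(ρ,ω)`, `v(·-τ) = w(ρ,ω)` and `v` is radial up to translation. -/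
theorem conclusion_radiality (p ω0 ω ρ : ℝ) (hp1 : 2 < p) (hp2 : p < 3)
    (Q : E3 → ℝ) (hQ : H1 Q) (hQrad : IsRadial Q) (hQpos : ∀ x, 0 < Q x)
    (hQnorm : l2sq Q = 1)
    (hQeq : ∀ x : E3, -(lap Q x) + ω0 * Q x - Q x * |Q x| ^ (p - 2) = 0)
    (v : E3 → ℝ) (hv : H1 v) (hvnorm : l2sq v = 1)
    (hcrit : ∀ h : E3 → ℝ, H1 h → Fprime p ρ ω v h = 0)
    (τ : E3) (r : E3 → ℝ) (hr : H1 r) (hperp : perpT0 Q r)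
    (hdec : (fun x => v (x - τ)) = fun x => Q x + r x)
    (ε0 ε4 : ℝ) (hε0 : 0 < ε0) (hε4 : 0 < ε4)
    (hsmall : h1norm r < min ε0 ε4)
    (P : (E3 → ℝ) → E3 → ℝ) (T : (E3 → ℝ) → E3)
    (hP : ∀ u : E3 → ℝ, H1 u → h1norm (fun x => u x - Q x) < ε0 →
      P u = transl Q (T u) ∧ perpTQ Q (T u) (fun x => u x - P u x))
    (hPuniq : ∀ u : E3 → ℝ, H1 u → h1norm (fun x => u x - Q x) < ε0 →
      ∀ σ : E3, perpTQ Q σ (fun x => u x - transl Q σ x) → transl Q σ = P u)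
    (w : E3 → ℝ) (hwH1 : H1 w) (hwrad : IsRadial w)
    (hwsmall : h1norm (fun x => w x - Q x) < ε4) (hwP : P w = Q)
    (hwcrit : ∀ h : E3 → ℝ, H1 h → perpT0 Q h → Fprime p ρ ω w h = 0)
    (hUniq : ∀ u₁ u₂ : E3 → ℝ,
      (H1 u₁ ∧ h1norm (fun x => u₁ x - Q x) < ε4 ∧ P u₁ = Q ∧
        ∀ h : E3 → ℝ, H1 h → perpT0 Q h → Fprime p ρ ω u₁ h = 0) →
      (H1 u₂ ∧ h1norm (fun x => u₂ x - Q x) < ε4 ∧ P u₂ = Q ∧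
        ∀ h : E3 → ℝ, H1 h → perpT0 Q h → Fprime p ρ ω u₂ h = 0) →
      u₁ = u₂) :
    P (fun x => v (x - τ)) = Q ∧
      (∀ h : E3 → ℝ, H1 h → perpT0 Q h →
        Fprime p ρ ω (fun x => v (x - τ)) h = 0) ∧
      (fun x => v (x - τ)) = w ∧ IsRadial (fun x => v (x - τ)) := by
  set u : E3 → ℝ := fun x => v (x - τ) with hu_def
  have huH1 : H1 u := by rw [hdec]; exact H1_add Q r hQ hr
  have hdiff : (fun x => u x - Q x) = r := by
    funext x
    have hx := congrFun hdec x
    rw [hx]; ring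
  have hsm0 : h1norm (fun x => u x - Q x) < ε0 := by
    rw [hdiff]; exact lt_of_lt_of_le hsmall (min_le_left _ _)
  have hsm4 : h1norm (fun x => u x - Q x) < ε4 := by
    rw [hdiff]; exact lt_of_lt_of_le hsmall (min_le_right _ _)
  -- P u = Q via uniqueness with σ = 0
  have hPu : P u = Q := by
    have hperp0 : perpTQ Q 0 (fun x => u x - transl Q 0 x) := by
      intro i
      have : (fun x : E3 => (u x - transl Q 0 x) * dQ Q i (x + 0))
          = fun x : E3 => r x * dQ Q i x := by
        funext x
        have hx := congrFun hdec x
        simp only [transl, add_zero, hx]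
        ring
      rw [this]
      exact hperp i
    have := hPuniq u huH1 hsm0 0 hperp0
    rw [← this]
    funext x; simp [transl]
  -- criticality of u
  have hcritu : ∀ h : E3 → ℝ, H1 h → Fprime p ρ ω u h = 0 := by
    intro h hh
    have ht := Fprime_transl p ρ ω v h hv.2.1 hh.2.1 τ
    show Fprime p ρ ω (fun x => v (x - τ)) h = 0
    rw [ht]
    exact hcrit _ (H1_transl h hh τ)
  have hcritu' : ∀ h : E3 → ℝ, H1 h → perpT0 Q h → Fprime p ρ ω u h = 0 :=
    fun h hh _ => hcritu h hh
  have huw : u = w := hUniq u w ⟨huH1, hsm4, hPu, hcritu'⟩ ⟨hwH1, hwsmall, hwP, hwcrit⟩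
  exact ⟨hPu, hcritu', huw, huw ▸ hwrad⟩
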